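/- For any constants B > 0 and D > 0, there are only finitely many algebraic numbers α with H(α) ≤ B and [ℚ(α):ℚ] ≤ D. -/

import Mathlib

open Polynomial Multiset

-- helper lemmas
lemma one_le_prod_max (s : Multiset ℂ) :
    1 ≤ (s.map (fun z => max ‖z‖ 1)).prod := by
  induction s using Multiset.induction_on with
  | empty => simp
  | cons a s ih =>
    rw [Multiset.map_cons, Multiset.prod_cons]
    nlinarith [le_max_right ‖a‖ 1]

lemma prod_max_mono {t s : Multiset ℂ} (h : t ≤ s) :
    (t.map (fun z => max ‖z‖ 1)).prod ≤
      (s.map (fun z => max ‖z‖ 1)).prod := by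
  obtain ⟨u, rfl⟩ := Multiset.le_iff_exists_add.mp h
  rw [Multiset.map_add, Multiset.prod_add]
  exact le_mul_of_one_le_right (le_trans zero_le_one (one_le_prod_max t)) (one_le_prod_max u)

lemma prod_abs_le_prod_max (t : Multiset ℂ) :
    (t.map (‖·‖)).prod ≤ (t.map (fun z => max ‖z‖ 1)).prod := by
  induction t using Multiset.induction_on with
  | empty => simp
  | cons a s ih =>
    rw [Multiset.map_cons, Multiset.prod_cons, Multiset.map_cons, Multiset.prod_cons]
    have h0 : (0:ℝ) ≤ (s.map (‖·‖)).prod :=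
      Multiset.prod_nonneg (fun x hx => by obtain ⟨z, -, rfl⟩ := Multiset.mem_map.mp hx; positivity)
    exact mul_le_mul (le_max_left _ _) ih h0 (le_trans zero_le_one (le_max_right _ _))

lemma abs_sum_le (s : Multiset ℂ) : ‖s.sum‖ ≤ (s.map (‖·‖)).sum := by
  induction s using Multiset.induction_on with
  | empty => simp
  | cons a s ih =>
    rw [Multiset.sum_cons, Multiset.map_cons, Multiset.sum_cons]
    exact le_trans (norm_add_le _ _) (by linarith)


/-- The Mahler measure of an integer polynomial `f = a_n (X - α_1) ⋯ (X - α_n)`: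
`M(f) = |a_n| ⬝ ∏ max(|α_i|, 1)`, over the complex roots with multiplicity. -/
noncomputable def mahlerMeasure (f : Polynomial ℤ) : ℝ :=
  |(f.leadingCoeff : ℝ)| *
    (((f.map (Int.castRingHom ℂ)).roots).map (fun z => max ‖z‖ 1)).prod

lemma abs_prod (t : Multiset ℂ) : ‖t.prod‖ = (t.map (‖·‖)).prod := by
  induction t using Multiset.induction_on with
  | empty => simp
  | cons a s ih => rw [Multiset.prod_cons, Multiset.map_cons, Multiset.prod_cons, norm_mul, ih]

lemma choose_le_two_pow' (n k : ℕ) : n.choose k ≤ 2 ^ n := by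
  rcases le_or_gt k n with h | h
  · calc n.choose k ≤ ∑ m ∈ Finset.range (n+1), n.choose m :=
        Finset.single_le_sum (fun _ _ => Nat.zero_le _)
          (Finset.mem_range.mpr (Nat.lt_succ_of_le h))
    _ = 2 ^ n := Nat.sum_range_choose n
  · rw [Nat.choose_eq_zero_of_lt h]; exact Nat.zero_le _

lemma one_le_mahlerMeasure {f : Polynomial ℤ} (hf : f ≠ 0) : 1 ≤ mahlerMeasure f := by
  unfold _root_.mahlerMeasure
  have h1 : (1:ℝ) ≤ |(f.leadingCoeff : ℝ)| := by
    have h2 : f.leadingCoeff ≠ 0 := Polynomial.leadingCoeff_ne_zero.mpr hf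
    rw [← Int.cast_abs]; exact_mod_cast Int.one_le_abs h2
  nlinarith [one_le_prod_max ((f.map (Int.castRingHom ℂ)).roots)]

lemma abs_coeff_le (f : Polynomial ℤ) (hf : f ≠ 0) (i : ℕ) :
    |(f.coeff i : ℝ)| ≤ 2 ^ f.natDegree * mahlerMeasure f := by
  have hinj : Function.Injective (Int.castRingHom ℂ) := Int.cast_injective
  set g := f.map (Int.castRingHom ℂ) with hgdef
  have hg0 : g ≠ 0 := (Polynomial.map_ne_zero_iff hinj).mpr hf
  have hdeg : g.natDegree = f.natDegree := Polynomial.natDegree_map_eq_of_injective hinj f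
  have habs : |(f.coeff i : ℝ)| = ‖g.coeff i‖ := by
    rw [hgdef, Polynomial.coeff_map]
    simp
  have hM : 1 ≤ mahlerMeasure f := one_le_mahlerMeasure hf
  by_cases hi : i ≤ f.natDegree
  · have hsplit : g.Splits := IsAlgClosed.splits g
    have hig : i ≤ g.natDegree := hdeg ▸ hi
    have hco := Polynomial.coeff_eq_esymm_roots_of_splits hsplit hig
    set k := g.natDegree - i with hk
    set P : ℝ := (g.roots.map (fun z => max ‖z‖ 1)).prod with hP
    have hP1 : 1 ≤ P := one_le_prod_max _
    have hesymm : ‖g.roots.esymm k‖ ≤ (2 ^ f.natDegree : ℝ) * P := by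
      rw [Multiset.esymm]
      refine le_trans (abs_sum_le _) ?_
      have hb : ∀ x ∈ ((g.roots.powersetCard k).map Multiset.prod).map (‖·‖), x ≤ P := by
        intro x hx
        obtain ⟨y, hy, rfl⟩ := Multiset.mem_map.mp hx
        obtain ⟨t, ht, rfl⟩ := Multiset.mem_map.mp hy
        have hts : t ≤ g.roots := (Multiset.mem_powersetCard.mp ht).1
        calc ‖t.prod‖ = (t.map (‖·‖)).prod := abs_prod t
          _ ≤ (t.map (fun z => max ‖z‖ 1)).prod := prod_abs_le_prod_max t
          _ ≤ P := prod_max_mono hts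
      refine le_trans (Multiset.sum_le_card_nsmul _ P hb) ?_
      rw [Multiset.card_map, Multiset.card_map, Multiset.card_powersetCard, nsmul_eq_mul]
      have hcard : ((Multiset.card g.roots).choose k : ℝ) ≤ (2 ^ f.natDegree : ℝ) := by
        have : (Multiset.card g.roots).choose k ≤ 2 ^ f.natDegree := by
          refine le_trans (choose_le_two_pow' _ _) ?_
          have hle : Multiset.card g.roots ≤ f.natDegree := hdeg ▸ g.card_roots'
          exact Nat.pow_le_pow_right (by norm_num) hle
        exact_mod_cast this
      nlinarith
    rw [habs, hco, norm_mul, norm_mul, norm_pow, norm_neg, norm_one, one_pow, mul_one]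
    have hlc : ‖g.leadingCoeff‖ = |(f.leadingCoeff : ℝ)| := by
      rw [hgdef, Polynomial.leadingCoeff_map_of_injective hinj]
      simp
    rw [hlc]
    have hlc0 : (0:ℝ) ≤ |(f.leadingCoeff : ℝ)| := abs_nonneg _
    calc |(f.leadingCoeff : ℝ)| * ‖g.roots.esymm k‖
        ≤ |(f.leadingCoeff : ℝ)| * ((2 ^ f.natDegree : ℝ) * P) := by
          exact mul_le_mul_of_nonneg_left hesymm hlc0
      _ = 2 ^ f.natDegree * mahlerMeasure f := by
          unfold _root_.mahlerMeasure; rw [← hgdef, ← hP]; ring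
  · rw [Polynomial.coeff_eq_zero_of_natDegree_lt (lt_of_not_ge hi)]
    simp only [Int.cast_zero, abs_zero]
    nlinarith [pow_pos (show (0:ℝ) < 2 by norm_num) f.natDegree]

/-- The primitive integer minimal polynomial of an algebraic number `α`:
the minimal polynomial of `α` over `ℚ` with denominators cleared, taken primitive. -/
noncomputable def intMinpoly (α : ℂ) : Polynomial ℤ :=
  (IsLocalization.integerNormalization (nonZeroDivisors ℤ) (minpoly ℚ α)).primPart

/-- The absolute multiplicative Weil height of an algebraic number `α`, characterized by
`H(α) ^ deg α = M(f)` where `f` is the primitive integer minimal polynomial of `α`. -/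
noncomputable def mulHeight (α : ℂ) : ℝ :=
  mahlerMeasure (intMinpoly α) ^ (((intMinpoly α).natDegree : ℝ)⁻¹)

section intMinpoly

variable {α : ℂ} (hα : IsAlgebraic ℚ α)

lemma intNorm_facts (hα : IsAlgebraic ℚ α) :
    intMinpoly α ≠ 0 ∧ (intMinpoly α).natDegree = (minpoly ℚ α).natDegree ∧
      Polynomial.aeval α (intMinpoly α) = 0 := by
  have hint : IsIntegral ℚ α := hα.isIntegral
  set p := minpoly ℚ α with hp
  have hp0 : p ≠ 0 := minpoly.ne_zero hint
  set q := IsLocalization.integerNormalization (nonZeroDivisors ℤ) p with hq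
  obtain ⟨b, hb⟩ := IsLocalization.integerNormalization_map_to_map (nonZeroDivisors ℤ) p
  have hb0 : (b : ℤ) ≠ 0 := nonZeroDivisors.coe_ne_zero b
  have hbp : (b : ℤ) • p ≠ 0 := smul_ne_zero hb0 hp0
  have hq0 : q ≠ 0 := by
    intro h
    rw [← hq] at hb
    rw [h, Polynomial.map_zero] at hb
    exact hbp hb.symm
  have hprim0 : q.primPart ≠ 0 := q.primPart_ne_zero
  refine ⟨hprim0, ?_, ?_⟩
  · have h1 : (intMinpoly α).natDegree = q.natDegree := q.natDegree_primPart
    have h2 : q.natDegree = (q.map (algebraMap ℤ ℚ)).natDegree :=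
      (Polynomial.natDegree_map_eq_of_injective (algebraMap ℤ ℚ).injective_int q).symm
    rw [h1, h2, hb]
    have hbq : ((b : ℤ) : ℚ) ≠ 0 := Int.cast_ne_zero.mpr hb0
    rw [zsmul_eq_mul, ← Polynomial.C_eq_intCast, Polynomial.natDegree_C_mul hbq]
  · have haq : Polynomial.aeval α q = 0 := by
      calc Polynomial.aeval α q
          = Polynomial.aeval α (q.map (algebraMap ℤ ℚ)) :=
            (Polynomial.aeval_map_algebraMap ℚ α q).symm
        _ = Polynomial.aeval α ((b : ℤ) • p) := by rw [hq, hb]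
        _ = (b : ℤ) • Polynomial.aeval α p := map_zsmul _ _ _
        _ = 0 := by rw [hp, minpoly.aeval]; simp
    have hdecomp := q.eq_C_content_mul_primPart
    have : Polynomial.aeval α (Polynomial.C q.content * q.primPart) = 0 := hdecomp ▸ haq
    rw [map_mul, Polynomial.aeval_C] at this
    have hc : (algebraMap ℤ ℂ) q.content ≠ 0 := by
      simp only [algebraMap_int_eq, eq_intCast, ne_eq, Int.cast_eq_zero]
      exact fun h => hq0 (Polynomial.content_eq_zero_iff.mp h)
    exact (mul_eq_zero.mp this).resolve_left hc

end intMinpoly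

lemma finite_polys (N : ℕ) (C : ℤ) :
    {f : Polynomial ℤ | f.natDegree ≤ N ∧ ∀ i, |f.coeff i| ≤ C}.Finite := by
  apply Set.Finite.of_finite_image (f := fun f (i : Fin (N+1)) => f.coeff i)
  · apply Set.Finite.subset (Set.finite_Icc (fun _ : Fin (N+1) => -C) (fun _ => C))
    rintro v ⟨f, ⟨hdeg, hc⟩, rfl⟩
    refine ⟨fun i => neg_le_of_abs_le (hc i), fun i => le_of_abs_le (hc i)⟩
  · rintro f ⟨hdf, -⟩ g ⟨hdg, -⟩ h
    ext n
    by_cases hn : n ≤ N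
    · exact congrFun h ⟨n, Nat.lt_succ_of_le hn⟩
    · rw [Polynomial.coeff_eq_zero_of_natDegree_lt (lt_of_le_of_lt hdf (lt_of_not_ge hn)),
        Polynomial.coeff_eq_zero_of_natDegree_lt (lt_of_le_of_lt hdg (lt_of_not_ge hn))]

/-- Northcott's theorem: for any `B > 0` and `D > 0`, there are only finitely many
algebraic numbers `α` with `H(α) ≤ B` and `[ℚ(α):ℚ] ≤ D`. -/
theorem finite_of_height_le_and_degree_le (B D : ℝ) (hB : 0 < B) (hD : 0 < D) :
    {α : ℂ | IsAlgebraic ℚ α ∧ mulHeight α ≤ B ∧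
      ((minpoly ℚ α).natDegree : ℝ) ≤ D}.Finite := by
  set N := ⌈D⌉₊ with hN
  set Cr : ℝ := 2 ^ N * max B 1 ^ N with hCr
  set C : ℤ := ⌈Cr⌉ with hC
  have hS : {f : Polynomial ℤ | f.natDegree ≤ N ∧ ∀ i, |f.coeff i| ≤ C}.Finite :=
    finite_polys N C
  apply Set.Finite.subset (hS.biUnion (fun f _ =>
    ((f.map (Int.castRingHom ℂ)).roots.toFinset : Finset ℂ).finite_toSet))
  rintro α ⟨halg, hh, hd⟩
  obtain ⟨hf0, hfdeg, hfroot⟩ := intNorm_facts halg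
  set f := intMinpoly α with hf
  have hn1 : 1 ≤ f.natDegree := by
    rw [hfdeg]; exact minpoly.natDegree_pos halg.isIntegral
  have hnN : f.natDegree ≤ N := by
    have h1 : (f.natDegree : ℝ) ≤ D := by rw [hfdeg]; exact hd
    have h2 : (f.natDegree : ℝ) ≤ (N : ℝ) := h1.trans (Nat.le_ceil D)
    exact_mod_cast h2
  have hM1 : 1 ≤ mahlerMeasure f := one_le_mahlerMeasure hf0
  have hMB : mahlerMeasure f ≤ max B 1 ^ N := by
    have h0 : (0:ℝ) ≤ mulHeight α := Real.rpow_nonneg (by linarith) _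
    have hHB : mulHeight α ≤ max B 1 := le_trans hh (le_max_left _ _)
    have key : mahlerMeasure f = (mulHeight α) ^ f.natDegree := by
      rw [mulHeight, ← hf]
      exact (Real.rpow_inv_natCast_pow (by linarith : (0:ℝ) ≤ mahlerMeasure f)
        (by omega : f.natDegree ≠ 0)).symm
    calc mahlerMeasure f = mulHeight α ^ f.natDegree := key
      _ ≤ max B 1 ^ f.natDegree := pow_le_pow_left₀ h0 hHB _
      _ ≤ max B 1 ^ N := pow_le_pow_right₀ (le_max_right _ _) hnN
  have hcoeff : ∀ i, |f.coeff i| ≤ C := by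
    intro i
    have h1 : |(f.coeff i : ℝ)| ≤ 2 ^ f.natDegree * mahlerMeasure f := abs_coeff_le f hf0 i
    have h2 : (2:ℝ) ^ f.natDegree * mahlerMeasure f ≤ Cr := by
      have h3 : (2:ℝ) ^ f.natDegree ≤ 2 ^ N :=
        pow_le_pow_right₀ (by norm_num) hnN
      have h4 : (0:ℝ) < 2 ^ f.natDegree := by positivity
      rw [hCr]
      exact mul_le_mul h3 hMB (by linarith) (by positivity)
    have h5 : ((|f.coeff i| : ℤ) : ℝ) ≤ (C : ℝ) := by
      rw [Int.cast_abs]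
      exact le_trans h1 (le_trans h2 (Int.le_ceil Cr))
    exact_mod_cast h5
  refine Set.mem_biUnion (⟨hnN, hcoeff⟩ :
    f ∈ {g : Polynomial ℤ | g.natDegree ≤ N ∧ ∀ i, |g.coeff i| ≤ C}) ?_
  have hinj : Function.Injective (Int.castRingHom ℂ) := Int.cast_injective
  rw [Finset.mem_coe, Multiset.mem_toFinset, Polynomial.mem_roots
    ((Polynomial.map_ne_zero_iff hinj).mpr hf0)]
  rw [Polynomial.IsRoot, Polynomial.eval_map,
    show Int.castRingHom ℂ = algebraMap ℤ ℂ from rfl, ← Polynomial.aeval_def]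
  exact hfroot
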